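/- Let i, j ≥ 1 be integers and let u(x,y) be a differentiable real function. Define G(i,j)(w) = Σ_{h=0}^{min(i,j)} [i!/(i−h)! · j!/(j−h)! · (i+j−1−h)!/(i+j−1)!]·w^h/h!. Then ∂/∂x G(i,j)(u(x,y)) = (i·j/(i+j−1))·u_x(x,y)·G(i−1,j−1) evaluated with parameters shifted, i.e. equals (ij/(i+j−1))·u_x(x,y)·Σ_{h=0}^{min(i,j)−1} [(i−1)!/(i−1−h)! · (j−1)!/(j−1−h)! · (i+j−2−h)!/(i+j−2)!]·u(x,y)^h/h!. -/

import Mathlib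

open Finset

theorem stmt_16 (i j : ℕ) (hi : 1 ≤ i) (hj : 1 ≤ j)
    (u : ℝ → ℝ → ℝ) (x y ux : ℝ) (hu : HasDerivAt (fun s => u s y) ux x) :
    HasDerivAt
      (fun s => ∑ h ∈ Finset.range (min i j + 1),
        ((i.factorial : ℝ) / ((i - h).factorial)) * ((j.factorial : ℝ) / ((j - h).factorial)) *
          (((i + j - 1 - h).factorial : ℝ) / ((i + j - 1).factorial)) * (u s y) ^ h / (h.factorial))
      (((i : ℝ) * j / ((i : ℝ) + j - 1)) * ux *
        ∑ h ∈ Finset.range (min i j),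
          (((i - 1).factorial : ℝ) / ((i - 1 - h).factorial)) *
            (((j - 1).factorial : ℝ) / ((j - 1 - h).factorial)) *
            (((i + j - 2 - h).factorial : ℝ) / ((i + j - 2).factorial)) * (u x y) ^ h /
            (h.factorial))
      x := by
  have key : ∀ h ∈ Finset.range (min i j + 1),
      HasDerivAt (fun s => ((i.factorial : ℝ) / ((i - h).factorial)) *
          ((j.factorial : ℝ) / ((j - h).factorial)) *
          (((i + j - 1 - h).factorial : ℝ) / ((i + j - 1).factorial)) * (u s y) ^ h /
          (h.factorial))
        (((i.factorial : ℝ) / ((i - h).factorial)) * ((j.factorial : ℝ) / ((j - h).factorial)) *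
          (((i + j - 1 - h).factorial : ℝ) / ((i + j - 1).factorial)) *
          ((h : ℝ) * (u x y) ^ (h - 1) * ux) / (h.factorial)) x := by
    intro h _
    exact ((hu.pow h).const_mul _).div_const _
  have H := HasDerivAt.fun_sum key
  refine H.congr_deriv ?_
  symm
  rw [Finset.sum_range_succ']
  simp only [Nat.cast_zero, zero_mul, mul_zero, zero_div, add_zero]
  rw [Finset.mul_sum]
  refine Finset.sum_congr rfl fun h hh => ?_
  have e1 : i - (h + 1) = i - 1 - h := by omega
  have e2 : j - (h + 1) = j - 1 - h := by omega
  have e3 : i + j - 1 - (h + 1) = i + j - 2 - h := by omega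
  have e4 : h + 1 - 1 = h := by omega
  have fi : (i.factorial : ℝ) = i * (i - 1).factorial := by
    exact_mod_cast (Nat.mul_factorial_pred (by omega)).symm
  have fj : (j.factorial : ℝ) = j * (j - 1).factorial := by
    exact_mod_cast (Nat.mul_factorial_pred (by omega)).symm
  have cij : ((i + j - 1 : ℕ) : ℝ) = (i : ℝ) + j - 1 := by
    rw [Nat.cast_sub (by omega)]; push_cast; ring
  have fij : ((i + j - 1).factorial : ℝ) = ((i : ℝ) + j - 1) * (i + j - 2).factorial := by
    have h1 : (i + j - 1).factorial = (i + j - 1) * (i + j - 2).factorial := by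
      have := (Nat.mul_factorial_pred (n := i + j - 1) (by omega)).symm
      have e : i + j - 1 - 1 = i + j - 2 := by omega
      rwa [e] at this
    rw [h1, Nat.cast_mul, cij]
  have fh : ((h + 1).factorial : ℝ) = (h + 1) * h.factorial := by
    rw [Nat.factorial_succ]; push_cast; ring
  have hij0 : ((i : ℝ) + j - 1) ≠ 0 := by
    have : (1 : ℝ) ≤ (i : ℝ) + j - 1 := by
      have hi' : (1 : ℝ) ≤ i := by exact_mod_cast hi
      have hj' : (1 : ℝ) ≤ j := by exact_mod_cast hj
      linarith
    linarith
  have n1 : ((i - 1 - h).factorial : ℝ) ≠ 0 := by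
    exact_mod_cast (Nat.factorial_ne_zero _)
  have n2 : ((j - 1 - h).factorial : ℝ) ≠ 0 := by
    exact_mod_cast (Nat.factorial_ne_zero _)
  have n3 : ((i + j - 2).factorial : ℝ) ≠ 0 := by
    exact_mod_cast (Nat.factorial_ne_zero _)
  have n4 : ((h).factorial : ℝ) ≠ 0 := by
    exact_mod_cast (Nat.factorial_ne_zero _)
  have n5 : ((h : ℝ) + 1) ≠ 0 := by positivity
  rw [e1, e2, e3, e4, fi, fj, fij, fh]
  push_cast
  field_simp
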